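/- For all integers i, j with i ≥ 1 and 0 ≤ j ≤ i, every graph in the family F_{i,j} is 2-connected; that is, it has at least three vertices and deleting any single vertex leaves the graph connected. -/

import Mathlib

open SimpleGraph

/-- The minimum size of a feedback vertex set of `G`. -/
noncomputable def phi {V : Type} (G : SimpleGraph V) : ℕ :=
  sInf {n : ℕ | ∃ S : Finset V, S.card = n ∧ (G.induce ((S : Set V)ᶜ)).IsAcyclic}

/-- The graph obtained from `H` by subdividing the edge `uv` once: delete the edge `uv`
and add a new vertex (`none`) adjacent exactly to `u` and `v`. -/
def subdivideEdge {V : Type} (H : SimpleGraph V) (u v : V) : SimpleGraph (Option V) :=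
  SimpleGraph.fromRel (fun x y =>
    (∃ p q : V, x = some p ∧ y = some q ∧ H.Adj p q ∧ s(p, q) ≠ s(u, v)) ∨
    (x = none ∧ (y = some u ∨ y = some v)))

/-- `a` has degree exactly two in `H`. -/
def HasDegreeTwo {V : Type} (H : SimpleGraph V) (a : V) : Prop :=
  ∃ x y : V, x ≠ y ∧ H.Adj a x ∧ H.Adj a y ∧ ∀ z : V, H.Adj a z → z = x ∨ z = y

/-- The operation `∘` applied with two distinct edges `u₁v₁`, `u₂v₂` and a degree-two vertex `a`:
subdivide both edges (new vertices `inr 0`, `inr 1`), then add a new vertex `inr 2` adjacent to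
`a` and the two subdivision vertices. -/
def circOpTwo {V : Type} (H : SimpleGraph V) (u₁ v₁ u₂ v₂ a : V) : SimpleGraph (V ⊕ Fin 3) :=
  SimpleGraph.fromRel (fun x y =>
    (∃ p q : V, x = Sum.inl p ∧ y = Sum.inl q ∧ H.Adj p q ∧
      s(p, q) ≠ s(u₁, v₁) ∧ s(p, q) ≠ s(u₂, v₂)) ∨
    (x = Sum.inr 0 ∧ (y = Sum.inl u₁ ∨ y = Sum.inl v₁)) ∨
    (x = Sum.inr 1 ∧ (y = Sum.inl u₂ ∨ y = Sum.inl v₂)) ∨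
    (x = Sum.inr 2 ∧ (y = Sum.inl a ∨ y = Sum.inr 0 ∨ y = Sum.inr 1)))

/-- The operation `∘` applied with `e₁ = e₂ = uv` and a degree-two vertex `a`: subdivide the
edge `uv` twice (replacing it by the path `u, inr 0, inr 1, v`), then add a new vertex `inr 2`
adjacent to `a` and the two subdivision vertices. -/
def circOpOne {V : Type} (H : SimpleGraph V) (u v a : V) : SimpleGraph (V ⊕ Fin 3) :=
  SimpleGraph.fromRel (fun x y =>
    (∃ p q : V, x = Sum.inl p ∧ y = Sum.inl q ∧ H.Adj p q ∧ s(p, q) ≠ s(u, v)) ∨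
    (x = Sum.inr 0 ∧ (y = Sum.inl u ∨ y = Sum.inr 1)) ∨
    (x = Sum.inr 1 ∧ y = Sum.inl v) ∨
    (x = Sum.inr 2 ∧ (y = Sum.inl a ∨ y = Sum.inr 0 ∨ y = Sum.inr 1)))

/-- `G` is obtained from `H` by one application of the operation `∘` at the degree-two
vertex `a`, using two (not necessarily distinct) edges of `H`. -/
def IsCircOp {V : Type} (H : SimpleGraph V) (a : V) (G : SimpleGraph (V ⊕ Fin 3)) : Prop :=
  (∃ u₁ v₁ u₂ v₂ : V, H.Adj u₁ v₁ ∧ H.Adj u₂ v₂ ∧ s(u₁, v₁) ≠ s(u₂, v₂) ∧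
      G = circOpTwo H u₁ v₁ u₂ v₂ a) ∨
  (∃ u v : V, H.Adj u v ∧ G = circOpOne H u v a)

/-- Membership (up to isomorphism) in the family `F_{i,j}`. -/
inductive IsInF : ∀ (i j : ℕ) {V : Type}, SimpleGraph V → Prop
  | cycle (i : ℕ) (hi : 3 ≤ i) : IsInF i 0 (SimpleGraph.cycleGraph i)
  | k4 : IsInF 1 1 (⊤ : SimpleGraph (Fin 4))
  | subdiv {i j : ℕ} {V : Type} {H : SimpleGraph V} {u v : V}
      (huv : H.Adj u v) (hH : IsInF i j H) : IsInF (i + 1) j (subdivideEdge H u v)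
  | op {i j : ℕ} {V : Type} {H : SimpleGraph V} {a : V} {G : SimpleGraph (V ⊕ Fin 3)}
      (ha : HasDegreeTwo H a) (hG : IsCircOp H a G) (hH : IsInF i j H) : IsInF i (j + 1) G
  | iso {i j : ℕ} {V W : Type} {H : SimpleGraph V} {G : SimpleGraph W}
      (e : Nonempty (G ≃g H)) (hH : IsInF i j H) : IsInF i j G

/-- `G` is a graph obtained from `H` by repeatedly (possibly zero times) subdividing edges. -/
inductive IsSubdivisionOf : ∀ {V : Type}, SimpleGraph V → ∀ {W : Type}, SimpleGraph W → Prop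
  | refl {V : Type} (G : SimpleGraph V) : IsSubdivisionOf G G
  | step {V W : Type} {H : SimpleGraph V} {G : SimpleGraph W} {u v : W}
      (huv : G.Adj u v) (h : IsSubdivisionOf H G) : IsSubdivisionOf H (subdivideEdge G u v)

/-- `G` contains an induced subdivision of `H`: some induced subgraph of `G` is isomorphic
to a graph obtained from `H` by repeatedly subdividing edges. -/
def ContainsInducedSubdivision {V W : Type} (G : SimpleGraph V) (H : SimpleGraph W) : Prop :=
  ∃ (s : Set V) (U : Type) (K : SimpleGraph U),
    IsSubdivisionOf H K ∧ Nonempty (G.induce s ≃g K)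

/-- The family `𝓕`: members of `F_{4,2} ∪ F_{4,3}` of girth at least five, together with
members `H` of `F_{3,2} ∪ F_{3,3}` having an edge `e` such that `H − e` has girth at least
five. -/
def InFamilyF {W : Type} (H : SimpleGraph W) : Prop :=
  ((IsInF 4 2 H ∨ IsInF 4 3 H) ∧ 5 ≤ H.girth) ∨
  ((IsInF 3 2 H ∨ IsInF 3 3 H) ∧ ∃ e ∈ H.edgeSet, 5 ≤ (H.deleteEdges {e}).girth)

/-- `G` contains two vertex-disjoint cycles, each of length less than five. -/
def HasTwoDisjointShortCycles {V : Type} (G : SimpleGraph V) : Prop :=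
  ∃ (u v : V) (c₁ : G.Walk u u) (c₂ : G.Walk v v), c₁.IsCycle ∧ c₂.IsCycle ∧
    c₁.length < 5 ∧ c₂.length < 5 ∧ ∀ x : V, x ∈ c₁.support → x ∉ c₂.support

lemma reach_transport {α β : Type*} {G : SimpleGraph α} {G' : SimpleGraph β} (f : α → β)
    (h : ∀ a b, G.Adj a b → G'.Reachable (f a) (f b)) {a b : α} (hr : G.Reachable a b) :
    G'.Reachable (f a) (f b) := by
  obtain ⟨w⟩ := hr
  induction w with
  | nil => exact Reachable.refl _
  | cons ha _ ih => exact (h _ _ ha).trans ih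

lemma connected_of_base {α : Type*} (G : SimpleGraph α) (b : α) (h : ∀ x, G.Reachable x b) :
    G.Connected := by
  haveI : Nonempty α := ⟨b⟩
  exact Connected.mk fun x y => (h x).trans (h y).symm

lemma exists_third {V : Type} (h3 : 3 ≤ Nat.card V) (p q : V) : ∃ z, z ≠ p ∧ z ≠ q := by
  have hf : Finite V := (Nat.card_pos_iff.mp (by omega)).2
  by_contra hc
  push_neg at hc
  classical
  have hinj : Function.Injective (fun z : V => if z = p then (0 : Fin 2) else 1) := by
    intro a b hab
    by_cases ha : a = p <;> by_cases hb : b = p <;> simp [ha, hb] at hab ⊢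
    · rw [hc a ha, hc b hb]
  have := Nat.card_le_card_of_injective _ hinj
  simp only [Nat.card_eq_fintype_card, Fintype.card_fin] at this
  omega

section TwoConnLemmas
variable {V : Type} {H : SimpleGraph V}

lemma pre_of_twoconn (h3 : 3 ≤ Nat.card V)
    (h2 : ∀ v : V, (H.induce {u : V | u ≠ v}).Connected) : H.Preconnected := by
  intro p q
  obtain ⟨z, hzp, hzq⟩ := exists_third h3 p q
  have hr : (H.induce {u : V | u ≠ z}).Reachable ⟨p, Ne.symm hzp⟩ ⟨q, Ne.symm hzq⟩ :=
    (h2 z).preconnected _ _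
  exact reach_transport (fun a : {u : V // u ≠ z} => (a : V))
    (fun a b hab => (Adj.reachable (by exact hab))) hr

lemma exists_nbr (h3 : 3 ≤ Nat.card V)
    (h2 : ∀ v : V, (H.induce {u : V | u ≠ v}).Connected) (x y : V) (hxy : x ≠ y) :
    ∃ w, H.Adj x w ∧ w ≠ y := by
  obtain ⟨z, hzx, hzy⟩ := exists_third h3 x y
  have hr : (H.induce {u : V | u ≠ y}).Reachable ⟨x, hxy⟩ ⟨z, hzy⟩ :=
    (h2 y).preconnected _ _
  obtain ⟨w⟩ := hr
  cases w with
  | nil => exact absurd rfl hzx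
  | cons ha _ =>
    rename_i b _
    exact ⟨b.1, by exact ha, b.2⟩

lemma pre_deleteEdge (h3 : 3 ≤ Nat.card V)
    (h2 : ∀ v : V, (H.induce {u : V | u ≠ v}).Connected) {u v : V} (huv : H.Adj u v) :
    (H.deleteEdges {s(u, v)}).Preconnected := by
  have key : ∀ p q : V, p ≠ u → q ≠ u → (H.deleteEdges {s(u, v)}).Reachable p q := by
    intro p q hp hq
    have hr : (H.induce {t : V | t ≠ u}).Reachable ⟨p, hp⟩ ⟨q, hq⟩ := (h2 u).preconnected _ _
    refine reach_transport (fun a : {t : V // t ≠ u} => (a : V)) (fun a b hab => ?_) hr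
    have hadj : H.Adj a.1 b.1 := hab
    refine Adj.reachable (deleteEdges_adj.mpr ⟨hadj, ?_⟩)
    simp only [Set.mem_singleton_iff, Sym2.eq_iff]
    rintro (⟨h1, h2'⟩ | ⟨h1, h2'⟩)
    · exact a.2 h1
    · exact b.2 h2' 
  obtain ⟨w, hw, hwv⟩ := exists_nbr h3 h2 u v huv.ne
  have e1 : (H.deleteEdges {s(u, v)}).Adj u w := by
    refine deleteEdges_adj.mpr ⟨hw, ?_⟩
    simp only [Set.mem_singleton_iff, Sym2.eq_iff]
    rintro (⟨h1, h2'⟩ | ⟨h1, h2'⟩)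
    · exact hwv h2'
    · exact huv.ne h1
  have keyu : ∀ q : V, q ≠ u → (H.deleteEdges {s(u, v)}).Reachable u q :=
    fun q hq => e1.reachable.trans (key w q hw.ne' hq)
  intro p q
  rcases eq_or_ne p u with hp | hp <;> rcases eq_or_ne q u with hq | hq
  · rw [hp, hq]
  · rw [hp]; exact keyu q hq
  · rw [hq]; exact (keyu p hp).symm
  · exact key p q hp hq

end TwoConnLemmas

/-! ### Generic induced-subgraph helpers -/

lemma induce_adj_intro {β : Type} {G' : SimpleGraph β} {s : Set β} {x y : β}
    (h : G'.Adj x y) (hx : x ∈ s) (hy : y ∈ s) : (G'.induce s).Adj ⟨x, hx⟩ ⟨y, hy⟩ := by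
  simpa using h

lemma induce_adj_elim {β : Type} {G' : SimpleGraph β} {s : Set β} {x y : s}
    (h : (G'.induce s).Adj x y) : G'.Adj x y := by
  simpa using h

lemma connected_induce_of_iso {V W : Type} {G : SimpleGraph V} {H : SimpleGraph W} (e : G ≃g H)
    (v : V) (h : (H.induce {u : W | u ≠ e v}).Connected) :
    (G.induce {u : V | u ≠ v}).Connected := by
  have hmem : ∀ w : {u : W // u ≠ e v}, (e.symm w : V) ∈ {u : V | u ≠ v} := by
    rintro ⟨w, hw⟩ h'
    exact hw (by simpa using congrArg e h')
  obtain ⟨b⟩ := h.nonempty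
  apply connected_of_base _ (⟨e.symm b, hmem b⟩ : {u : V | u ≠ v})
  rintro ⟨x, hx⟩
  have hex : (e x : W) ∈ {u : W | u ≠ e v} := fun h' => hx (e.injective h')
  have hr : (H.induce {u : W | u ≠ e v}).Reachable ⟨e x, hex⟩ b := h.preconnected _ _
  have := reach_transport (G := H.induce {u : W | u ≠ e v})
    (G' := G.induce {u : V | u ≠ v}) (fun w => ⟨e.symm w, hmem w⟩)
    (fun p q hpq => Adj.reachable (induce_adj_intro (e.symm.map_adj_iff.mpr (induce_adj_elim hpq)) _ _)) hr
  convert this using 2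
  simp

/-! ### Base cases -/

lemma cycle_twoconn (n : ℕ) (v : Fin (n + 3)) :
    ((SimpleGraph.cycleGraph (n + 3)).induce {u | u ≠ v}).Connected := by
  have h1 : v + 1 ≠ v := by
    intro h
    have : (1 : Fin (n + 3)) = 0 := by
      have := add_eq_left.mp h
      exact this
    simpa using congrArg Fin.val this
  have key : ∀ k : ℕ, ∀ x : Fin (n + 3), ∀ hx : x ≠ v, (x - (v + 1)).val = k →
      ((SimpleGraph.cycleGraph (n + 3)).induce {u | u ≠ v}).Reachable ⟨x, hx⟩ ⟨v + 1, h1⟩ := by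
    intro k
    induction k with
    | zero =>
      intro x hx hk
      have h0 : x - (v + 1) = 0 := Fin.ext (by simpa using hk)
      have hx1 : x = v + 1 := by rwa [sub_eq_zero] at h0
      subst hx1
      exact Reachable.refl _
    | succ k ih =>
      intro x hx hk
      have hx1 : x ≠ v + 1 := by
        intro h
        rw [h, sub_self] at hk
        simp at hk
      have hadj : (SimpleGraph.cycleGraph (n + 3)).Adj x (x - 1) :=
        SimpleGraph.cycleGraph_adj.mpr (Or.inl (by rw [sub_sub_cancel]))
      have hx2 : x - 1 ≠ v := by
        intro h
        exact hx1 (by rw [sub_eq_iff_eq_add] at h; exact h)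
      have hy : x - (v + 1) ≠ 0 := fun h => hx1 (by rwa [sub_eq_zero] at h)
      have hval : (x - 1 - (v + 1)).val = k := by
        have heq : x - 1 - (v + 1) = (x - (v + 1)) - 1 := sub_right_comm _ _ _
        rw [heq, Fin.coe_sub_one, if_neg hy, hk]
        omega
      exact (Adj.reachable (induce_adj_intro hadj hx hx2)).trans (ih (x - 1) hx2 hval)
  apply connected_of_base _ (⟨v + 1, h1⟩ : {u : Fin (n+3) | u ≠ v})
  rintro ⟨x, hx⟩
  exact key _ x hx rfl

lemma k4_twoconn (v : Fin 4) :
    ((⊤ : SimpleGraph (Fin 4)).induce {u | u ≠ v}).Connected := by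
  have h1 : v + 1 ≠ v := by
    intro h
    have : (1 : Fin 4) = 0 := add_eq_left.mp h
    simpa using congrArg Fin.val this
  apply connected_of_base _ (⟨v + 1, h1⟩ : {u : Fin 4 | u ≠ v})
  rintro ⟨x, hx⟩
  rcases eq_or_ne x (v + 1) with h | h
  · subst h; exact Reachable.refl _
  · exact Adj.reachable (induce_adj_intro h hx h1)

/-! ### Adjacency intro lemmas -/

section AdjIntro
variable {V : Type} {H : SimpleGraph V}

lemma subdivideEdge_adj_some {u v p q : V} (h : H.Adj p q) (hne : s(p, q) ≠ s(u, v)) :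
    (subdivideEdge H u v).Adj (some p) (some q) :=
  (SimpleGraph.fromRel_adj _ _ _).mpr
    ⟨by simpa using h.ne, Or.inl (Or.inl ⟨p, q, rfl, rfl, h, hne⟩)⟩

lemma subdivideEdge_adj_none_left (u v : V) : (subdivideEdge H u v).Adj none (some u) :=
  (SimpleGraph.fromRel_adj _ _ _).mpr ⟨by simp, Or.inl (Or.inr ⟨rfl, Or.inl rfl⟩)⟩

lemma subdivideEdge_adj_none_right (u v : V) : (subdivideEdge H u v).Adj none (some v) :=
  (SimpleGraph.fromRel_adj _ _ _).mpr ⟨by simp, Or.inl (Or.inr ⟨rfl, Or.inr rfl⟩)⟩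

variable {u₁ v₁ u₂ v₂ a : V}

lemma circOpTwo_adj_inl {p q : V} (h : H.Adj p q) (h1 : s(p, q) ≠ s(u₁, v₁))
    (h2 : s(p, q) ≠ s(u₂, v₂)) :
    (circOpTwo H u₁ v₁ u₂ v₂ a).Adj (Sum.inl p) (Sum.inl q) :=
  (SimpleGraph.fromRel_adj _ _ _).mpr
    ⟨by simpa using h.ne, Or.inl (Or.inl ⟨p, q, rfl, rfl, h, h1, h2⟩)⟩

lemma circOpTwo_adj_0u : (circOpTwo H u₁ v₁ u₂ v₂ a).Adj (Sum.inr 0) (Sum.inl u₁) :=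
  (SimpleGraph.fromRel_adj _ _ _).mpr ⟨by simp, Or.inl (Or.inr (Or.inl ⟨rfl, Or.inl rfl⟩))⟩

lemma circOpTwo_adj_0v : (circOpTwo H u₁ v₁ u₂ v₂ a).Adj (Sum.inr 0) (Sum.inl v₁) :=
  (SimpleGraph.fromRel_adj _ _ _).mpr ⟨by simp, Or.inl (Or.inr (Or.inl ⟨rfl, Or.inr rfl⟩))⟩

lemma circOpTwo_adj_1u : (circOpTwo H u₁ v₁ u₂ v₂ a).Adj (Sum.inr 1) (Sum.inl u₂) :=
  (SimpleGraph.fromRel_adj _ _ _).mpr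
    ⟨by simp, Or.inl (Or.inr (Or.inr (Or.inl ⟨rfl, Or.inl rfl⟩)))⟩

lemma circOpTwo_adj_1v : (circOpTwo H u₁ v₁ u₂ v₂ a).Adj (Sum.inr 1) (Sum.inl v₂) :=
  (SimpleGraph.fromRel_adj _ _ _).mpr
    ⟨by simp, Or.inl (Or.inr (Or.inr (Or.inl ⟨rfl, Or.inr rfl⟩)))⟩

lemma circOpTwo_adj_2a : (circOpTwo H u₁ v₁ u₂ v₂ a).Adj (Sum.inr 2) (Sum.inl a) :=
  (SimpleGraph.fromRel_adj _ _ _).mpr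
    ⟨by simp, Or.inl (Or.inr (Or.inr (Or.inr ⟨rfl, Or.inl rfl⟩)))⟩

lemma circOpTwo_adj_20 : (circOpTwo H u₁ v₁ u₂ v₂ a).Adj (Sum.inr 2) (Sum.inr 0) :=
  (SimpleGraph.fromRel_adj _ _ _).mpr
    ⟨by simp, Or.inl (Or.inr (Or.inr (Or.inr ⟨rfl, Or.inr (Or.inl rfl)⟩)))⟩

lemma circOpTwo_adj_21 : (circOpTwo H u₁ v₁ u₂ v₂ a).Adj (Sum.inr 2) (Sum.inr 1) :=
  (SimpleGraph.fromRel_adj _ _ _).mpr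
    ⟨by simp, Or.inl (Or.inr (Or.inr (Or.inr ⟨rfl, Or.inr (Or.inr rfl)⟩)))⟩

variable {u v : V}

lemma circOpOne_adj_inl {p q : V} (h : H.Adj p q) (h1 : s(p, q) ≠ s(u, v)) :
    (circOpOne H u v a).Adj (Sum.inl p) (Sum.inl q) :=
  (SimpleGraph.fromRel_adj _ _ _).mpr
    ⟨by simpa using h.ne, Or.inl (Or.inl ⟨p, q, rfl, rfl, h, h1⟩)⟩

lemma circOpOne_adj_0u : (circOpOne H u v a).Adj (Sum.inr 0) (Sum.inl u) :=
  (SimpleGraph.fromRel_adj _ _ _).mpr ⟨by simp, Or.inl (Or.inr (Or.inl ⟨rfl, Or.inl rfl⟩))⟩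

lemma circOpOne_adj_01 : (circOpOne H u v a).Adj (Sum.inr 0) (Sum.inr 1) :=
  (SimpleGraph.fromRel_adj _ _ _).mpr ⟨by simp, Or.inl (Or.inr (Or.inl ⟨rfl, Or.inr rfl⟩))⟩

lemma circOpOne_adj_1v : (circOpOne H u v a).Adj (Sum.inr 1) (Sum.inl v) :=
  (SimpleGraph.fromRel_adj _ _ _).mpr ⟨by simp, Or.inl (Or.inr (Or.inr (Or.inl ⟨rfl, rfl⟩)))⟩

lemma circOpOne_adj_2a : (circOpOne H u v a).Adj (Sum.inr 2) (Sum.inl a) :=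
  (SimpleGraph.fromRel_adj _ _ _).mpr
    ⟨by simp, Or.inl (Or.inr (Or.inr (Or.inr ⟨rfl, Or.inl rfl⟩)))⟩

lemma circOpOne_adj_20 : (circOpOne H u v a).Adj (Sum.inr 2) (Sum.inr 0) :=
  (SimpleGraph.fromRel_adj _ _ _).mpr
    ⟨by simp, Or.inl (Or.inr (Or.inr (Or.inr ⟨rfl, Or.inr (Or.inl rfl)⟩)))⟩

lemma circOpOne_adj_21 : (circOpOne H u v a).Adj (Sum.inr 2) (Sum.inr 1) :=
  (SimpleGraph.fromRel_adj _ _ _).mpr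
    ⟨by simp, Or.inl (Or.inr (Or.inr (Or.inr ⟨rfl, Or.inr (Or.inr rfl)⟩)))⟩

end AdjIntro

/-! ### Connectivity after subdivision -/

lemma subdiv_conn {V : Type} {H : SimpleGraph V} {u v : V} (huv : H.Adj u v)
    (h3 : 3 ≤ Nat.card V) (h2 : ∀ x : V, (H.induce {t : V | t ≠ x}).Connected)
    (w : Option V) : ((subdivideEdge H u v).induce {y : Option V | y ≠ w}).Connected := by
  cases w with
  | none =>
    have hmem : ∀ p : V, (some p : Option V) ∈ {y : Option V | y ≠ none} := fun p => by simp
    apply connected_of_base _ ⟨some u, hmem u⟩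
    rintro ⟨x, hx⟩
    cases x with
    | none => exact absurd rfl hx
    | some p =>
      have hr : (H.deleteEdges {s(u, v)}).Reachable p u := pre_deleteEdge h3 h2 huv p u
      exact reach_transport (fun t : V => (⟨some t, hmem t⟩ : {y : Option V // y ≠ none}))
        (fun c d hcd => by
          rw [SimpleGraph.deleteEdges_adj] at hcd
          exact Adj.reachable (induce_adj_intro
            (subdivideEdge_adj_some hcd.1 (by simpa using hcd.2)) (hmem c) (hmem d))) hr
  | some x =>
    have hnm : (none : Option V) ∈ {y : Option V | y ≠ some x} := by simp
    obtain ⟨c, hcx, hcadj⟩ : ∃ c : V, c ≠ x ∧ (subdivideEdge H u v).Adj none (some c) := by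
      rcases eq_or_ne u x with rfl | hux
      · exact ⟨v, fun h => huv.ne h.symm, subdivideEdge_adj_none_right u v⟩
      · exact ⟨u, hux, subdivideEdge_adj_none_left u v⟩
    apply connected_of_base _ ⟨none, hnm⟩
    rintro ⟨y, hy⟩
    cases y with
    | none => exact Reachable.refl _
    | some p =>
      have hp : p ≠ x := fun h => hy (by rw [h])
      have hmem' : ∀ t : {t : V // t ≠ x}, (some t.1 : Option V) ∈ {y : Option V | y ≠ some x} :=
        fun t h => t.2 (by simpa using h)
      have hr : (H.induce {t : V | t ≠ x}).Reachable ⟨p, hp⟩ ⟨c, hcx⟩ := (h2 x).preconnected _ _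
      have step : ∀ s t : {t : V // t ≠ x}, (H.induce {t : V | t ≠ x}).Adj s t →
          ((subdivideEdge H u v).induce {y : Option V | y ≠ some x}).Reachable
            ⟨some s.1, hmem' s⟩ ⟨some t.1, hmem' t⟩ := by
        intro s t hst
        have hadj : H.Adj s.1 t.1 := induce_adj_elim hst
        by_cases he : s(s.1, t.1) = s(u, v)
        · rcases Sym2.eq_iff.mp he with ⟨hs, ht⟩ | ⟨hs, ht⟩
          · have e1 : (subdivideEdge H u v).Adj (some s.1) none := by
              rw [hs]; exact (subdivideEdge_adj_none_left u v).symm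
            have e2 : (subdivideEdge H u v).Adj none (some t.1) := by
              rw [ht]; exact subdivideEdge_adj_none_right u v
            exact (Adj.reachable (induce_adj_intro e1 (hmem' s) hnm)).trans
              (Adj.reachable (induce_adj_intro e2 hnm (hmem' t)))
          · have e1 : (subdivideEdge H u v).Adj (some s.1) none := by
              rw [hs]; exact (subdivideEdge_adj_none_right u v).symm
            have e2 : (subdivideEdge H u v).Adj none (some t.1) := by
              rw [ht]; exact subdivideEdge_adj_none_left u v
            exact (Adj.reachable (induce_adj_intro e1 (hmem' s) hnm)).trans
              (Adj.reachable (induce_adj_intro e2 hnm (hmem' t)))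
        · exact Adj.reachable (induce_adj_intro (subdivideEdge_adj_some hadj he)
            (hmem' s) (hmem' t))
      have := reach_transport (fun t : {t : V // t ≠ x} =>
        (⟨some t.1, hmem' t⟩ : {y : Option V // y ≠ some x})) step hr
      exact this.trans (Adj.reachable (induce_adj_intro hcadj hnm (hmem' ⟨c, hcx⟩))).symm

/-! ### circOp connectivity -/

lemma fin3_cases : ∀ i : Fin 3, i = 0 ∨ i = 1 ∨ i = 2 := by decide

lemma circOpOne_step {V : Type} {H : SimpleGraph V} {u v a : V} {S : Set (V ⊕ Fin 3)}
    {p q : V} (hp : Sum.inl p ∈ S) (hq : Sum.inl q ∈ S)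
    (m0 : s(p, q) = s(u, v) → (Sum.inr 0 : V ⊕ Fin 3) ∈ S)
    (m1 : s(p, q) = s(u, v) → (Sum.inr 1 : V ⊕ Fin 3) ∈ S)
    (hadj : H.Adj p q) :
    ((circOpOne H u v a).induce S).Reachable ⟨Sum.inl p, hp⟩ ⟨Sum.inl q, hq⟩ := by
  by_cases he : s(p, q) = s(u, v)
  · have m0' := m0 he
    have m1' := m1 he
    rcases Sym2.eq_iff.mp he with ⟨rfl, rfl⟩ | ⟨rfl, rfl⟩
    · exact (Adj.reachable (induce_adj_intro circOpOne_adj_0u.symm hp m0')).trans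
        ((Adj.reachable (induce_adj_intro circOpOne_adj_01 m0' m1')).trans
          (Adj.reachable (induce_adj_intro circOpOne_adj_1v m1' hq)))
    · exact (Adj.reachable (induce_adj_intro circOpOne_adj_1v.symm hp m1')).trans
        ((Adj.reachable (induce_adj_intro circOpOne_adj_01.symm m1' m0')).trans
          (Adj.reachable (induce_adj_intro circOpOne_adj_0u m0' hq)))
  · exact Adj.reachable (induce_adj_intro (circOpOne_adj_inl hadj he) hp hq)

lemma circOpTwo_step {V : Type} {H : SimpleGraph V} {u₁ v₁ u₂ v₂ a : V} {S : Set (V ⊕ Fin 3)}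
    {p q : V} (hp : Sum.inl p ∈ S) (hq : Sum.inl q ∈ S)
    (m0 : s(p, q) = s(u₁, v₁) → (Sum.inr 0 : V ⊕ Fin 3) ∈ S)
    (m1 : s(p, q) = s(u₂, v₂) → (Sum.inr 1 : V ⊕ Fin 3) ∈ S)
    (hadj : H.Adj p q) :
    ((circOpTwo H u₁ v₁ u₂ v₂ a).induce S).Reachable ⟨Sum.inl p, hp⟩ ⟨Sum.inl q, hq⟩ := by
  by_cases he1 : s(p, q) = s(u₁, v₁)
  · have m0' := m0 he1
    rcases Sym2.eq_iff.mp he1 with ⟨rfl, rfl⟩ | ⟨rfl, rfl⟩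
    · exact (Adj.reachable (induce_adj_intro circOpTwo_adj_0u.symm hp m0')).trans
        (Adj.reachable (induce_adj_intro circOpTwo_adj_0v m0' hq))
    · exact (Adj.reachable (induce_adj_intro circOpTwo_adj_0v.symm hp m0')).trans
        (Adj.reachable (induce_adj_intro circOpTwo_adj_0u m0' hq))
  · by_cases he2 : s(p, q) = s(u₂, v₂)
    · have m1' := m1 he2
      rcases Sym2.eq_iff.mp he2 with ⟨rfl, rfl⟩ | ⟨rfl, rfl⟩
      · exact (Adj.reachable (induce_adj_intro circOpTwo_adj_1u.symm hp m1')).trans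
          (Adj.reachable (induce_adj_intro circOpTwo_adj_1v m1' hq))
      · exact (Adj.reachable (induce_adj_intro circOpTwo_adj_1v.symm hp m1')).trans
          (Adj.reachable (induce_adj_intro circOpTwo_adj_1u m1' hq))
    · exact Adj.reachable (induce_adj_intro (circOpTwo_adj_inl hadj he1 he2) hp hq)

lemma circOpOne_conn {V : Type} {H : SimpleGraph V} {u v a : V} (huv : H.Adj u v)
    (h3 : 3 ≤ Nat.card V) (h2 : ∀ x : V, (H.induce {t : V | t ≠ x}).Connected)
    (w : V ⊕ Fin 3) : ((circOpOne H u v a).induce {y : V ⊕ Fin 3 | y ≠ w}).Connected := by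
  have hpre : H.Preconnected := pre_of_twoconn h3 h2
  have hdel : (H.deleteEdges {s(u, v)}).Preconnected := pre_deleteEdge h3 h2 huv
  rcases w with x | i
  · -- deleted vertex is `inl x`; base is `inr 2`.
    have m0 : (Sum.inr 0 : V ⊕ Fin 3) ∈ {y : V ⊕ Fin 3 | y ≠ Sum.inl x} := by simp
    have m1 : (Sum.inr 1 : V ⊕ Fin 3) ∈ {y : V ⊕ Fin 3 | y ≠ Sum.inl x} := by simp
    have m2 : (Sum.inr 2 : V ⊕ Fin 3) ∈ {y : V ⊕ Fin 3 | y ≠ Sum.inl x} := by simp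
    have minl : ∀ t : {t : V // t ≠ x},
        (Sum.inl t.1 : V ⊕ Fin 3) ∈ {y : V ⊕ Fin 3 | y ≠ Sum.inl x} :=
      fun t h => t.2 (by simpa using h)
    have step : ∀ s t : {t : V // t ≠ x}, (H.induce {t : V | t ≠ x}).Adj s t →
        ((circOpOne H u v a).induce {y : V ⊕ Fin 3 | y ≠ Sum.inl x}).Reachable
          ⟨Sum.inl s.1, minl s⟩ ⟨Sum.inl t.1, minl t⟩ :=
      fun s t hst => circOpOne_step (minl s) (minl t) (fun _ => m0) (fun _ => m1)
        (induce_adj_elim hst)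
    obtain ⟨c, hcx, hcr⟩ : ∃ c : V, ∃ hcx : c ≠ x,
        ((circOpOne H u v a).induce {y : V ⊕ Fin 3 | y ≠ Sum.inl x}).Reachable
          ⟨Sum.inl c, minl ⟨c, hcx⟩⟩ ⟨Sum.inr 2, m2⟩ := by
      rcases eq_or_ne u x with rfl | hux
      · refine ⟨v, Ne.symm huv.ne, ?_⟩
        exact (Adj.reachable (induce_adj_intro
            (circOpOne_adj_1v (H:=H) (u:=u) (v:=v) (a:=a)).symm (minl ⟨v, Ne.symm huv.ne⟩) m1)).trans
          (Adj.reachable (induce_adj_intro (circOpOne_adj_21 (H:=H) (u:=u) (v:=v) (a:=a)).symm m1 m2))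
      · refine ⟨u, hux, ?_⟩
        exact (Adj.reachable (induce_adj_intro
            (circOpOne_adj_0u (H:=H) (u:=u) (v:=v) (a:=a)).symm (minl ⟨u, hux⟩) m0)).trans
          (Adj.reachable (induce_adj_intro (circOpOne_adj_20 (H:=H) (u:=u) (v:=v) (a:=a)).symm m0 m2))
    apply connected_of_base _ ⟨Sum.inr 2, m2⟩
    rintro ⟨y, hy⟩
    rcases y with p | i
    · have hp : p ≠ x := fun h => hy (by rw [h])
      have hr : (H.induce {t : V | t ≠ x}).Reachable ⟨p, hp⟩ ⟨c, hcx⟩ := (h2 x).preconnected _ _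
      exact (reach_transport (fun t : {t : V // t ≠ x} =>
        (⟨Sum.inl t.1, minl t⟩ : {y : V ⊕ Fin 3 // y ≠ Sum.inl x})) step hr).trans hcr
    · rcases fin3_cases i with rfl | rfl | rfl
      · exact Adj.reachable (induce_adj_intro circOpOne_adj_20.symm m0 m2)
      · exact Adj.reachable (induce_adj_intro circOpOne_adj_21.symm m1 m2)
      · exact Reachable.refl _
  · have minl : ∀ p : V, (Sum.inl p : V ⊕ Fin 3) ∈ {y : V ⊕ Fin 3 | y ≠ Sum.inr i} :=
      fun p => by simp
    rcases fin3_cases i with rfl | rfl | rfl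
    · -- deleted `inr 0`; base `inl v`.
      have m1 : (Sum.inr 1 : V ⊕ Fin 3) ∈ {y : V ⊕ Fin 3 | y ≠ Sum.inr 0} := by simp
      have m2 : (Sum.inr 2 : V ⊕ Fin 3) ∈ {y : V ⊕ Fin 3 | y ≠ Sum.inr 0} := by simp
      have step : ∀ p q : V, (H.deleteEdges {s(u, v)}).Adj p q →
          ((circOpOne H u v a).induce {y : V ⊕ Fin 3 | y ≠ Sum.inr 0}).Reachable
            ⟨Sum.inl p, minl p⟩ ⟨Sum.inl q, minl q⟩ := by
        intro p q hpq
        rw [SimpleGraph.deleteEdges_adj] at hpq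
        exact circOpOne_step (minl p) (minl q)
          (fun h => absurd h (by simpa using hpq.2)) (fun h => absurd h (by simpa using hpq.2))
          hpq.1
      have tr : ∀ p : V, ((circOpOne H u v a).induce {y : V ⊕ Fin 3 | y ≠ Sum.inr 0}).Reachable
          ⟨Sum.inl p, minl p⟩ ⟨Sum.inl v, minl v⟩ :=
        fun p => reach_transport (fun t : V =>
          (⟨Sum.inl t, minl t⟩ : {y : V ⊕ Fin 3 // y ≠ Sum.inr 0})) step (hdel p v)
      apply connected_of_base _ ⟨Sum.inl v, minl v⟩
      rintro ⟨y, hy⟩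
      rcases y with p | i
      · exact tr p
      · rcases fin3_cases i with rfl | rfl | rfl
        · exact absurd rfl hy
        · exact Adj.reachable (induce_adj_intro circOpOne_adj_1v m1 (minl v))
        · exact (Adj.reachable (induce_adj_intro circOpOne_adj_2a m2 (minl a))).trans (tr a)
    · -- deleted `inr 1`; base `inl u`.
      have m0 : (Sum.inr 0 : V ⊕ Fin 3) ∈ {y : V ⊕ Fin 3 | y ≠ Sum.inr 1} := by simp
      have m2 : (Sum.inr 2 : V ⊕ Fin 3) ∈ {y : V ⊕ Fin 3 | y ≠ Sum.inr 1} := by simp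
      have step : ∀ p q : V, (H.deleteEdges {s(u, v)}).Adj p q →
          ((circOpOne H u v a).induce {y : V ⊕ Fin 3 | y ≠ Sum.inr 1}).Reachable
            ⟨Sum.inl p, minl p⟩ ⟨Sum.inl q, minl q⟩ := by
        intro p q hpq
        rw [SimpleGraph.deleteEdges_adj] at hpq
        exact circOpOne_step (minl p) (minl q)
          (fun h => absurd h (by simpa using hpq.2)) (fun h => absurd h (by simpa using hpq.2))
          hpq.1
      have tr : ∀ p : V, ((circOpOne H u v a).induce {y : V ⊕ Fin 3 | y ≠ Sum.inr 1}).Reachable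
          ⟨Sum.inl p, minl p⟩ ⟨Sum.inl u, minl u⟩ :=
        fun p => reach_transport (fun t : V =>
          (⟨Sum.inl t, minl t⟩ : {y : V ⊕ Fin 3 // y ≠ Sum.inr 1})) step (hdel p u)
      apply connected_of_base _ ⟨Sum.inl u, minl u⟩
      rintro ⟨y, hy⟩
      rcases y with p | i
      · exact tr p
      · rcases fin3_cases i with rfl | rfl | rfl
        · exact Adj.reachable (induce_adj_intro circOpOne_adj_0u m0 (minl u))
        · exact absurd rfl hy
        · exact ((Adj.reachable (induce_adj_intro circOpOne_adj_20 m2 m0)).trans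
            (Adj.reachable (induce_adj_intro circOpOne_adj_0u m0 (minl u))))
    · -- deleted `inr 2`; base `inl u`.
      have m0 : (Sum.inr 0 : V ⊕ Fin 3) ∈ {y : V ⊕ Fin 3 | y ≠ Sum.inr 2} := by simp
      have m1 : (Sum.inr 1 : V ⊕ Fin 3) ∈ {y : V ⊕ Fin 3 | y ≠ Sum.inr 2} := by simp
      have step : ∀ p q : V, H.Adj p q →
          ((circOpOne H u v a).induce {y : V ⊕ Fin 3 | y ≠ Sum.inr 2}).Reachable
            ⟨Sum.inl p, minl p⟩ ⟨Sum.inl q, minl q⟩ :=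
        fun p q hpq => circOpOne_step (minl p) (minl q) (fun _ => m0) (fun _ => m1) hpq
      have tr : ∀ p : V, ((circOpOne H u v a).induce {y : V ⊕ Fin 3 | y ≠ Sum.inr 2}).Reachable
          ⟨Sum.inl p, minl p⟩ ⟨Sum.inl u, minl u⟩ :=
        fun p => reach_transport (fun t : V =>
          (⟨Sum.inl t, minl t⟩ : {y : V ⊕ Fin 3 // y ≠ Sum.inr 2})) step (hpre p u)
      apply connected_of_base _ ⟨Sum.inl u, minl u⟩
      rintro ⟨y, hy⟩
      rcases y with p | i
      · exact tr p
      · rcases fin3_cases i with rfl | rfl | rfl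
        · exact Adj.reachable (induce_adj_intro circOpOne_adj_0u m0 (minl u))
        · exact (Adj.reachable (induce_adj_intro circOpOne_adj_1v m1 (minl v))).trans (tr v)
        · exact absurd rfl hy

lemma circOpTwo_conn {V : Type} {H : SimpleGraph V} {u₁ v₁ u₂ v₂ a : V}
    (h1 : H.Adj u₁ v₁) (he2 : H.Adj u₂ v₂)
    (h3 : 3 ≤ Nat.card V) (h2 : ∀ x : V, (H.induce {t : V | t ≠ x}).Connected)
    (w : V ⊕ Fin 3) :
    ((circOpTwo H u₁ v₁ u₂ v₂ a).induce {y : V ⊕ Fin 3 | y ≠ w}).Connected := by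
  have hpre : H.Preconnected := pre_of_twoconn h3 h2
  have hdel1 : (H.deleteEdges {s(u₁, v₁)}).Preconnected := pre_deleteEdge h3 h2 h1
  have hdel2 : (H.deleteEdges {s(u₂, v₂)}).Preconnected := pre_deleteEdge h3 h2 he2
  rcases w with x | i
  · -- deleted vertex is `inl x`; base is `inr 2`.
    have m0 : (Sum.inr 0 : V ⊕ Fin 3) ∈ {y : V ⊕ Fin 3 | y ≠ Sum.inl x} := by simp
    have m1 : (Sum.inr 1 : V ⊕ Fin 3) ∈ {y : V ⊕ Fin 3 | y ≠ Sum.inl x} := by simp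
    have m2 : (Sum.inr 2 : V ⊕ Fin 3) ∈ {y : V ⊕ Fin 3 | y ≠ Sum.inl x} := by simp
    have minl : ∀ t : {t : V // t ≠ x},
        (Sum.inl t.1 : V ⊕ Fin 3) ∈ {y : V ⊕ Fin 3 | y ≠ Sum.inl x} :=
      fun t h => t.2 (by simpa using h)
    have step : ∀ s t : {t : V // t ≠ x}, (H.induce {t : V | t ≠ x}).Adj s t →
        ((circOpTwo H u₁ v₁ u₂ v₂ a).induce {y : V ⊕ Fin 3 | y ≠ Sum.inl x}).Reachable
          ⟨Sum.inl s.1, minl s⟩ ⟨Sum.inl t.1, minl t⟩ :=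
      fun s t hst => circOpTwo_step (minl s) (minl t) (fun _ => m0) (fun _ => m1)
        (induce_adj_elim hst)
    obtain ⟨c, hcx, hcr⟩ : ∃ c : V, ∃ hcx : c ≠ x,
        ((circOpTwo H u₁ v₁ u₂ v₂ a).induce {y : V ⊕ Fin 3 | y ≠ Sum.inl x}).Reachable
          ⟨Sum.inl c, minl ⟨c, hcx⟩⟩ ⟨Sum.inr 2, m2⟩ := by
      rcases eq_or_ne u₁ x with rfl | hux
      · refine ⟨v₁, Ne.symm h1.ne, ?_⟩
        exact (Adj.reachable (induce_adj_intro
            (circOpTwo_adj_0v (H:=H) (u₁:=u₁) (v₁:=v₁) (u₂:=u₂) (v₂:=v₂) (a:=a)).symm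
            (minl ⟨v₁, Ne.symm h1.ne⟩) m0)).trans
          (Adj.reachable (induce_adj_intro
            (circOpTwo_adj_20 (H:=H) (u₁:=u₁) (v₁:=v₁) (u₂:=u₂) (v₂:=v₂) (a:=a)).symm m0 m2))
      · refine ⟨u₁, hux, ?_⟩
        exact (Adj.reachable (induce_adj_intro
            (circOpTwo_adj_0u (H:=H) (u₁:=u₁) (v₁:=v₁) (u₂:=u₂) (v₂:=v₂) (a:=a)).symm
            (minl ⟨u₁, hux⟩) m0)).trans
          (Adj.reachable (induce_adj_intro
            (circOpTwo_adj_20 (H:=H) (u₁:=u₁) (v₁:=v₁) (u₂:=u₂) (v₂:=v₂) (a:=a)).symm m0 m2))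
    apply connected_of_base _ ⟨Sum.inr 2, m2⟩
    rintro ⟨y, hy⟩
    rcases y with p | i
    · have hp : p ≠ x := fun h => hy (by rw [h])
      have hr : (H.induce {t : V | t ≠ x}).Reachable ⟨p, hp⟩ ⟨c, hcx⟩ := (h2 x).preconnected _ _
      exact (reach_transport (fun t : {t : V // t ≠ x} =>
        (⟨Sum.inl t.1, minl t⟩ : {y : V ⊕ Fin 3 // y ≠ Sum.inl x})) step hr).trans hcr
    · rcases fin3_cases i with rfl | rfl | rfl
      · exact Adj.reachable (induce_adj_intro circOpTwo_adj_20.symm m0 m2)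
      · exact Adj.reachable (induce_adj_intro circOpTwo_adj_21.symm m1 m2)
      · exact Reachable.refl _
  · have minl : ∀ p : V, (Sum.inl p : V ⊕ Fin 3) ∈ {y : V ⊕ Fin 3 | y ≠ Sum.inr i} :=
      fun p => by simp
    rcases fin3_cases i with rfl | rfl | rfl
    · -- deleted `inr 0`; base `inl u₂`.
      have m1 : (Sum.inr 1 : V ⊕ Fin 3) ∈ {y : V ⊕ Fin 3 | y ≠ Sum.inr 0} := by simp
      have m2 : (Sum.inr 2 : V ⊕ Fin 3) ∈ {y : V ⊕ Fin 3 | y ≠ Sum.inr 0} := by simp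
      have step : ∀ p q : V, (H.deleteEdges {s(u₁, v₁)}).Adj p q →
          ((circOpTwo H u₁ v₁ u₂ v₂ a).induce {y : V ⊕ Fin 3 | y ≠ Sum.inr 0}).Reachable
            ⟨Sum.inl p, minl p⟩ ⟨Sum.inl q, minl q⟩ := by
        intro p q hpq
        rw [SimpleGraph.deleteEdges_adj] at hpq
        exact circOpTwo_step (minl p) (minl q)
          (fun h => absurd h (by simpa using hpq.2)) (fun _ => m1) hpq.1
      have tr : ∀ p : V,
          ((circOpTwo H u₁ v₁ u₂ v₂ a).induce {y : V ⊕ Fin 3 | y ≠ Sum.inr 0}).Reachable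
            ⟨Sum.inl p, minl p⟩ ⟨Sum.inl u₂, minl u₂⟩ :=
        fun p => reach_transport (fun t : V =>
          (⟨Sum.inl t, minl t⟩ : {y : V ⊕ Fin 3 // y ≠ Sum.inr 0})) step (hdel1 p u₂)
      apply connected_of_base _ ⟨Sum.inl u₂, minl u₂⟩
      rintro ⟨y, hy⟩
      rcases y with p | i
      · exact tr p
      · rcases fin3_cases i with rfl | rfl | rfl
        · exact absurd rfl hy
        · exact Adj.reachable (induce_adj_intro circOpTwo_adj_1u m1 (minl u₂))
        · exact (Adj.reachable (induce_adj_intro circOpTwo_adj_21 m2 m1)).trans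
            (Adj.reachable (induce_adj_intro circOpTwo_adj_1u m1 (minl u₂)))
    · -- deleted `inr 1`; base `inl u₁`.
      have m0 : (Sum.inr 0 : V ⊕ Fin 3) ∈ {y : V ⊕ Fin 3 | y ≠ Sum.inr 1} := by simp
      have m2 : (Sum.inr 2 : V ⊕ Fin 3) ∈ {y : V ⊕ Fin 3 | y ≠ Sum.inr 1} := by simp
      have step : ∀ p q : V, (H.deleteEdges {s(u₂, v₂)}).Adj p q →
          ((circOpTwo H u₁ v₁ u₂ v₂ a).induce {y : V ⊕ Fin 3 | y ≠ Sum.inr 1}).Reachable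
            ⟨Sum.inl p, minl p⟩ ⟨Sum.inl q, minl q⟩ := by
        intro p q hpq
        rw [SimpleGraph.deleteEdges_adj] at hpq
        exact circOpTwo_step (minl p) (minl q)
          (fun _ => m0) (fun h => absurd h (by simpa using hpq.2)) hpq.1
      have tr : ∀ p : V,
          ((circOpTwo H u₁ v₁ u₂ v₂ a).induce {y : V ⊕ Fin 3 | y ≠ Sum.inr 1}).Reachable
            ⟨Sum.inl p, minl p⟩ ⟨Sum.inl u₁, minl u₁⟩ :=
        fun p => reach_transport (fun t : V =>
          (⟨Sum.inl t, minl t⟩ : {y : V ⊕ Fin 3 // y ≠ Sum.inr 1})) step (hdel2 p u₁)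
      apply connected_of_base _ ⟨Sum.inl u₁, minl u₁⟩
      rintro ⟨y, hy⟩
      rcases y with p | i
      · exact tr p
      · rcases fin3_cases i with rfl | rfl | rfl
        · exact Adj.reachable (induce_adj_intro circOpTwo_adj_0u m0 (minl u₁))
        · exact absurd rfl hy
        · exact (Adj.reachable (induce_adj_intro circOpTwo_adj_20 m2 m0)).trans
            (Adj.reachable (induce_adj_intro circOpTwo_adj_0u m0 (minl u₁)))
    · -- deleted `inr 2`; base `inl u₁`.
      have m0 : (Sum.inr 0 : V ⊕ Fin 3) ∈ {y : V ⊕ Fin 3 | y ≠ Sum.inr 2} := by simp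
      have m1 : (Sum.inr 1 : V ⊕ Fin 3) ∈ {y : V ⊕ Fin 3 | y ≠ Sum.inr 2} := by simp
      have step : ∀ p q : V, H.Adj p q →
          ((circOpTwo H u₁ v₁ u₂ v₂ a).induce {y : V ⊕ Fin 3 | y ≠ Sum.inr 2}).Reachable
            ⟨Sum.inl p, minl p⟩ ⟨Sum.inl q, minl q⟩ :=
        fun p q hpq => circOpTwo_step (minl p) (minl q) (fun _ => m0) (fun _ => m1) hpq
      have tr : ∀ p : V,
          ((circOpTwo H u₁ v₁ u₂ v₂ a).induce {y : V ⊕ Fin 3 | y ≠ Sum.inr 2}).Reachable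
            ⟨Sum.inl p, minl p⟩ ⟨Sum.inl u₁, minl u₁⟩ :=
        fun p => reach_transport (fun t : V =>
          (⟨Sum.inl t, minl t⟩ : {y : V ⊕ Fin 3 // y ≠ Sum.inr 2})) step (hpre p u₁)
      apply connected_of_base _ ⟨Sum.inl u₁, minl u₁⟩
      rintro ⟨y, hy⟩
      rcases y with p | i
      · exact tr p
      · rcases fin3_cases i with rfl | rfl | rfl
        · exact Adj.reachable (induce_adj_intro circOpTwo_adj_0u m0 (minl u₁))
        · exact (Adj.reachable (induce_adj_intro circOpTwo_adj_1u m1 (minl u₂))).trans (tr u₂)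
        · exact absurd rfl hy

lemma finite_of_three_le {α : Type} (h : 3 ≤ Nat.card α) : Finite α :=
  (Nat.card_pos_iff.mp (by omega)).2

theorem isInF_twoconn {i j : ℕ} {V : Type} {G : SimpleGraph V} (hG : IsInF i j G) :
    3 ≤ Nat.card V ∧ ∀ v : V, (G.induce {u : V | u ≠ v}).Connected := by
  induction hG with
  | cycle i hi =>
    obtain ⟨n, rfl⟩ : ∃ n, i = n + 3 := ⟨i - 3, by omega⟩
    exact ⟨by simp [Nat.card_eq_fintype_card], cycle_twoconn n⟩
  | k4 =>
    exact ⟨by simp [Nat.card_eq_fintype_card], k4_twoconn⟩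
  | subdiv huv hH ih =>
    obtain ⟨h3, h2⟩ := ih
    haveI := finite_of_three_le h3
    refine ⟨?_, subdiv_conn huv h3 h2⟩
    rw [Finite.card_option]
    omega
  | op ha hop hH ih =>
    obtain ⟨h3, h2⟩ := ih
    haveI := finite_of_three_le h3
    constructor
    · rw [Nat.card_sum]
      have : Nat.card (Fin 3) = 3 := by simp [Nat.card_eq_fintype_card]
      omega
    · rcases hop with ⟨u₁, v₁, u₂, v₂, ha1, ha2, hne, rfl⟩ | ⟨u, v, hauv, rfl⟩
      · exact circOpTwo_conn ha1 ha2 h3 h2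
      · exact circOpOne_conn hauv h3 h2
  | iso e hH ih =>
    obtain ⟨h3, h2⟩ := ih
    obtain ⟨e⟩ := e
    refine ⟨?_, fun v => connected_induce_of_iso e v (h2 (e v))⟩
    rw [Nat.card_congr e.toEquiv]
    exact h3

/-- For `i ≥ 1` and `0 ≤ j ≤ i`, every `G ∈ F_{i,j}` is 2-connected: it has at
least three vertices and deleting any single vertex leaves the graph connected. -/
theorem statement_4 (i j : ℕ) (hi : 1 ≤ i) (hj : j ≤ i) {V : Type} (G : SimpleGraph V)
    (hG : IsInF i j G) :
    3 ≤ Nat.card V ∧ ∀ v : V, (G.induce {u : V | u ≠ v}).Connected :=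
  isInF_twoconn hG
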